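/- Let G = (A, B, E) be a bipartite graph, k > 0 an integer, and d an integer with d ≥ the maximal degree of an optimal semi-matching of G. Let E' ⊆ E be such that for every a ∈ A, deg_{E'}(a) = min{k, deg_E(a)}. Then there is an incomplete d-bounded semi-matching S ⊆ E' with |S| ≥ min{k·d, |A|}. -/

import Mathlib

open Finset

variable {α β : Type*} [Fintype α] [Fintype β] [DecidableEq α] [DecidableEq β]

/-- Degree of a vertex `b ∈ B` with respect to an edge set `S`. -/
def degB (S : Finset (α × β)) (b : β) : ℕ := (S.filter fun e => e.2 = b).card

/-- Degree of a vertex `a ∈ A` with respect to an edge set `S`. -/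
def degA (S : Finset (α × β)) (a : α) : ℕ := (S.filter fun e => e.1 = a).card

/-- Maximal degree of a vertex with respect to an edge set `S`. -/
def maxDeg (S : Finset (α × β)) : ℕ :=
  max (Finset.univ.sup (degA S)) (Finset.univ.sup (degB S))

/-- `S` is a semi-matching of `A'` into `B` using edges of `E`. -/
def IsSemi (A' : Finset α) (E S : Finset (α × β)) : Prop :=
  S ⊆ E ∧ (∀ e ∈ S, e.1 ∈ A') ∧ ∀ a ∈ A', degA S a = 1

/-- An optimal semi-matching of `A'` into `B` using edges of `E`:
a semi-matching minimizing the maximal degree. -/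
def IsOptSemi (A' : Finset α) (E S : Finset (α × β)) : Prop :=
  IsSemi A' E S ∧ ∀ T, IsSemi A' E T → maxDeg S ≤ maxDeg T

/-- Neighborhood of a set `X ⊆ A` of vertices with respect to an edge set `E`. -/
def nbr (E : Finset (α × β)) (X : Finset α) : Finset β :=
  Finset.univ.filter fun b => ∃ a ∈ X, (a, b) ∈ E


omit [Fintype α] [Fintype β] in
private lemma degA_insert (S : Finset (α × β)) (e : α × β) (he : e ∉ S) (x : α) :
    degA (insert e S) x = if e.1 = x then degA S x + 1 else degA S x := by
  rw [degA, Finset.filter_insert]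
  split
  · rw [Finset.card_insert_of_notMem (fun h => he (Finset.mem_of_mem_filter _ h)), degA]
  · rfl

omit [Fintype α] [Fintype β] in
private lemma degB_insert (S : Finset (α × β)) (e : α × β) (he : e ∉ S) (y : β) :
    degB (insert e S) y = if e.2 = y then degB S y + 1 else degB S y := by
  rw [degB, Finset.filter_insert]
  split
  · rw [Finset.card_insert_of_notMem (fun h => he (Finset.mem_of_mem_filter _ h)), degB]
  · rfl

/-- If `E' ⊆ E` keeps `min{k, deg_E(a)}` edges at every `a ∈ A` and `d` is at least the
optimal semi-matching degree of `G`, then `E'` contains an incomplete `d`-bounded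
semi-matching of size at least `min{k·d, |A|}`. -/
theorem incomplete_semi_from_stored_edges (E E' : Finset (α × β)) (k d : ℕ) (hk : 0 < k)
    (Sstar : Finset (α × β)) (hSstar : IsOptSemi Finset.univ E Sstar)
    (hd : maxDeg Sstar ≤ d)
    (hE' : E' ⊆ E) (hdeg : ∀ a : α, degA E' a = min k (degA E a)) :
    ∃ S ⊆ E', (∀ a : α, degA S a ≤ 1) ∧ (∀ b : β, degB S b ≤ d) ∧
      min (k * d) (Fintype.card α) ≤ S.card := by
  classical
  obtain ⟨⟨hSsubE, _, hSdeg⟩, _⟩ := hSstar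
  have hSdeg' : ∀ a : α, degA Sstar a = 1 := fun a => hSdeg a (mem_univ a)
  -- at small vertices, E' contains all edges of E
  have hfull : ∀ a : α, degA E a < k →
      E'.filter (fun e => e.1 = a) = E.filter (fun e => e.1 = a) := by
    intro a ha
    apply Finset.eq_of_subset_of_card_le (Finset.filter_subset_filter _ hE')
    have h1 : degA E' a = degA E a := by
      rw [hdeg a, min_eq_right ha.le]
    simpa [degA] using h1.ge
  have hdB : ∀ b, degB Sstar b ≤ d := by
    intro b
    refine le_trans ?_ (le_trans (le_max_right _ _) hd)
    exact Finset.le_sup (mem_univ b)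
  set P : Finset (α × β) → Prop := fun S =>
    S ⊆ E' ∧ (∀ a, degA S a ≤ 1) ∧ (∀ b, degB S b ≤ d) ∧
      (∀ a, degA E a < k → degA S a = 1) with hPdef
  set S0 := Sstar.filter (fun e => degA E e.1 < k) with hS0def
  have hP0 : P S0 := by
    refine ⟨?_, ?_, ?_, ?_⟩
    · intro e he
      simp only [hS0def, mem_filter] at he
      have heE : e ∈ E.filter (fun e' => e'.1 = e.1) := by
        simp [hSsubE he.1]
      rw [← hfull e.1 he.2] at heE
      exact (mem_filter.mp heE).1
    · intro a
      calc degA S0 a ≤ degA Sstar a :=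
            Finset.card_le_card (Finset.filter_subset_filter _ (Finset.filter_subset _ _))
        _ = 1 := hSdeg' a
    · intro b
      exact le_trans (Finset.card_le_card
        (Finset.filter_subset_filter _ (Finset.filter_subset _ _))) (hdB b)
    · intro a ha
      have : S0.filter (fun e => e.1 = a) = Sstar.filter (fun e => e.1 = a) := by
        rw [hS0def, Finset.filter_filter]
        apply Finset.filter_congr
        intro e _
        constructor
        · rintro ⟨_, h⟩; exact h
        · rintro h; exact ⟨by rw [h]; exact ha, h⟩
      rw [degA, this, ← degA, hSdeg' a]
  obtain ⟨S, hSmem, hSmax⟩ := Finset.exists_max_image (E'.powerset.filter P)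
    Finset.card ⟨S0, by rw [Finset.mem_filter, Finset.mem_powerset]; exact ⟨hP0.1, hP0⟩⟩
  rw [Finset.mem_filter, Finset.mem_powerset] at hSmem
  have hSsub := hSmem.1
  have hSE' := hSmem.2.1
  have hSA := hSmem.2.2.1
  have hSB := hSmem.2.2.2.1
  have hSsmall := hSmem.2.2.2.2
  refine ⟨S, hSsub, hSA, hSB, ?_⟩
  by_cases hall : ∀ a : α, degA S a = 1
  · -- everyone matched: |S| = |A|
    have hcard : S.card = Fintype.card α := by
      rw [Finset.card_eq_sum_card_fiberwise (f := Prod.fst) (t := Finset.univ)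
        (fun e _ => mem_univ _)]
      calc (∑ a : α, (S.filter fun e => e.1 = a).card) = ∑ _a : α, 1 :=
            Finset.sum_congr rfl (fun a _ => hall a)
        _ = Fintype.card α := by simp
    rw [hcard]
    exact min_le_right _ _
  · push_neg at hall
    obtain ⟨a, ha⟩ := hall
    have ha0 : degA S a = 0 := by
      have := hSA a
      omega
    have hak : k ≤ degA E a := by
      by_contra h
      exact ha (hSsmall a (by omega))
    have haE' : degA E' a = k := by rw [hdeg a, min_eq_left hak]
    set N : Finset β := (E'.filter (fun e => e.1 = a)).image Prod.snd with hNdef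
    have hNcard : N.card = k := by
      rw [hNdef, Finset.card_image_of_injOn, ← degA, haE']
      intro e he e' he' h
      rw [Finset.mem_coe, Finset.mem_filter] at he he'
      exact Prod.ext (he.2.trans he'.2.symm) h
    have hNfull : ∀ b ∈ N, d ≤ degB S b := by
      intro b hb
      by_contra hlt
      push_neg at hlt
      have habE' : (a, b) ∈ E' := by
        rw [hNdef, Finset.mem_image] at hb
        obtain ⟨e, he, heb⟩ := hb
        rw [Finset.mem_filter] at he
        have : e = (a, b) := Prod.ext he.2 heb
        rw [← this]; exact he.1
      have habS : (a, b) ∉ S := by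
        intro h
        have h1 : (a, b) ∈ S.filter (fun e => e.1 = a) := by simp [h]
        have h2 : 0 < degA S a := Finset.card_pos.mpr ⟨_, h1⟩
        omega
      have hPins : P (insert (a, b) S) := by
        have hdegAins : ∀ x, degA (insert (a, b) S) x ≤ 1 := by
          intro x
          rw [degA_insert S (a, b) habS x]
          split
          · next h =>
              have h0 : degA S x = 0 := by rw [← h]; exact ha0
              omega
          · exact hSA x
        refine ⟨Finset.insert_subset habE' hSE', hdegAins, ?_, ?_⟩
        · intro y
          rw [degB_insert S (a, b) habS y]
          split
          · next h =>
              have h0 : degB S y < d := by rw [← h]; exact hlt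
              omega
          · exact hSB y
        · intro x hx
          have h1 : degA S x ≤ degA (insert (a, b) S) x :=
            Finset.card_le_card (Finset.filter_subset_filter _ (Finset.subset_insert _ _))
          have h3 := hSsmall x hx
          have h2 := hdegAins x
          omega
      have hmem' : insert (a, b) S ∈ E'.powerset.filter P := by
        rw [Finset.mem_filter, Finset.mem_powerset]
        exact ⟨hPins.1, hPins⟩
      have := hSmax _ hmem'
      rw [Finset.card_insert_of_notMem habS] at this
      omega
    -- |S| ≥ k * d
    have hsum : ∑ b ∈ N, degB S b ≤ S.card := by
      have hfib : (S.filter (fun e => e.2 ∈ N)).card = ∑ b ∈ N, degB S b := by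
        rw [Finset.card_eq_sum_card_fiberwise (f := Prod.snd) (s := S.filter (fun e => e.2 ∈ N)) (t := N)
          (fun e he => (Finset.mem_filter.mp he).2)]
        refine Finset.sum_congr rfl (fun b hb => ?_)
        rw [Finset.filter_filter, degB]
        congr 1
        apply Finset.filter_congr
        intro e _
        constructor
        · rintro ⟨_, h⟩; exact h
        · intro h; exact ⟨by rw [h]; exact hb, h⟩
      rw [← hfib]
      exact Finset.card_le_card (Finset.filter_subset _ _)
    have : k * d ≤ ∑ b ∈ N, degB S b := by
      calc k * d = ∑ _b ∈ N, d := by rw [Finset.sum_const, hNcard, smul_eq_mul]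
        _ ≤ _ := Finset.sum_le_sum hNfull
    exact le_trans (min_le_left _ _) (le_trans this hsum)
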